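/- Let X be an S-valued random variable on (Ω, F, P), let (F_t)_{t≥1} be a filtration with F_∞ := σ(∪_t F_t), and suppose X is F_∞-measurable. Let (X_t)_{t≥1} be random variables such that for each t, X_t and X are conditionally independent and identically distributed given F_t. Then X_t → X in probability as t → ∞. -/

import Mathlib

open MeasureTheory Filter Topology

set_option maxHeartbeats 1000000

/-- Key step: for each measurable `A`, `P (X ∈ A, X_t ∉ A) → 0`. -/
theorem stmt13_aux {Ω S : Type*} [mΩ : MeasurableSpace Ω]
    [MetricSpace S] [CompleteSpace S] [SecondCountableTopology S]
    [MeasurableSpace S] [BorelSpace S]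
    (P : Measure Ω) [IsProbabilityMeasure P]
    (F : ℕ → MeasurableSpace Ω) (hmono : Monotone F) (hle : ∀ t, F t ≤ mΩ)
    (X : Ω → S) (hX : Measurable[⨆ t, F t] X)
    (Xt : ℕ → Ω → S) (hXt : ∀ t, Measurable[mΩ] (Xt t))
    (ξ : ℕ → Ω → Measure S) (hξm : ∀ t, Measurable[F t] (ξ t))
    (hξp : ∀ t ω, IsProbabilityMeasure (ξ t ω))
    (hiid : ∀ t, ∀ A B : Set S, MeasurableSet A → MeasurableSet B →
      ∀ C : Set Ω, MeasurableSet[F t] C →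
        P (C ∩ X ⁻¹' A ∩ Xt t ⁻¹' B) = ∫⁻ ω in C, ξ t ω A * ξ t ω B ∂P)
    (A : Set S) (hA : MeasurableSet A) :
    Tendsto (fun t => P (X ⁻¹' A ∩ Xt t ⁻¹' Aᶜ)) atTop (𝓝 0) := by
  have hXm : Measurable X := hX.mono (iSup_le hle) le_rfl
  set ℱ : Filtration ℕ mΩ := ⟨F, hmono, hle⟩ with hℱ
  -- measurability of ω ↦ ξ t ω B
  have hmeasB : ∀ (t : ℕ) (B : Set S), MeasurableSet B →
      Measurable[F t] (fun ω => ξ t ω B) := fun t B hB =>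
    (Measure.measurable_coe hB).comp (hξm t)
  -- `ξ t · B ≤ 1`
  have hle1 : ∀ (t : ℕ) (B : Set S) ω, ξ t ω B ≤ 1 := fun t B ω => by
    haveI := hξp t ω; exact prob_le_one
  -- identification with condexp
  have hcond : ∀ (B : Set S), MeasurableSet B → ∀ t : ℕ,
      (fun ω => (ξ t ω B).toReal)
        =ᵐ[P] P[(X ⁻¹' B).indicator (fun _ => (1 : ℝ)) | F t] := by
    intro B hB t
    have hXB : MeasurableSet (X ⁻¹' B) := hXm hB
    have hind : Integrable ((X ⁻¹' B).indicator (fun _ => (1 : ℝ))) P :=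
      (integrable_const (1 : ℝ)).indicator hXB
    have hgmeas : Measurable[F t] (fun ω => (ξ t ω B).toReal) :=
      (hmeasB t B hB).ennreal_toReal
    have hgmeas' : Measurable (fun ω => (ξ t ω B).toReal) := hgmeas.mono (hle t) le_rfl
    have hgbd : ∀ ω, ‖(ξ t ω B).toReal‖ ≤ 1 := by
      intro ω
      rw [Real.norm_eq_abs, abs_of_nonneg ENNReal.toReal_nonneg]
      exact ENNReal.toReal_le_of_le_ofReal one_pos.le (by simpa using hle1 t B ω)
    have hgint : Integrable (fun ω => (ξ t ω B).toReal) P :=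
      (integrable_const (1 : ℝ)).mono' hgmeas'.aestronglyMeasurable
        (Filter.Eventually.of_forall hgbd)
    refine ae_eq_condExp_of_forall_setIntegral_eq (hle t) hind
      (fun s _ _ => hgint.integrableOn) (fun C hC _ => ?_)
      (StronglyMeasurable.aestronglyMeasurable
        (hgmeas.stronglyMeasurable))
    -- ∫ over C of toReal (ξ t ω B) = ∫ over C of the indicator
    have h1 : P (C ∩ X ⁻¹' B) = ∫⁻ ω in C, ξ t ω B ∂P := by
      have := hiid t B Set.univ hB MeasurableSet.univ C hC
      simpa [Set.preimage_univ, measure_univ] using this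
    have h2 : ∫ ω in C, (ξ t ω B).toReal ∂P = (∫⁻ ω in C, ξ t ω B ∂P).toReal := by
      refine integral_toReal ((hmeasB t B hB).mono (hle t) le_rfl).aemeasurable ?_
      exact Filter.Eventually.of_forall fun ω => lt_of_le_of_lt (hle1 t B ω) ENNReal.one_lt_top
    have h3 : ∫ ω in C, (X ⁻¹' B).indicator (fun _ => (1 : ℝ)) ω ∂P
        = (P (C ∩ X ⁻¹' B)).toReal := by
      rw [setIntegral_indicator hXB]
      simp [Measure.restrict_apply ((hle t C hC).inter hXB), Measure.real]
    rw [h2, h3, h1]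
  -- Lévy upward convergence for indicators
  have hlevy : ∀ (B : Set S), MeasurableSet B →
      ∀ᵐ ω ∂P, Tendsto (fun t => (ξ t ω B).toReal) atTop
        (𝓝 ((X ⁻¹' B).indicator (fun _ => (1 : ℝ)) ω)) := by
    intro B hB
    have hXB : MeasurableSet[⨆ t, F t] (X ⁻¹' B) := hX hB
    have hind : Integrable ((X ⁻¹' B).indicator (fun _ => (1 : ℝ))) P :=
      (integrable_const (1 : ℝ)).indicator (hXm hB)
    have hsm : StronglyMeasurable[⨆ t, ℱ t] ((X ⁻¹' B).indicator (fun _ => (1 : ℝ))) := by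
      exact (stronglyMeasurable_const (b := (1:ℝ))).indicator hXB
    have hconv := hind.tendsto_ae_condExp (ℱ := ℱ) (μ := P) hsm
    have hae : ∀ᵐ ω ∂P, ∀ t : ℕ, (ξ t ω B).toReal
        = (P[(X ⁻¹' B).indicator (fun _ => (1 : ℝ)) | F t]) ω :=
      ae_all_iff.2 fun t => hcond B hB t
    filter_upwards [hconv, hae] with ω hω hωeq
    have : (fun t => (ξ t ω B).toReal)
        = fun t => (P[(X ⁻¹' B).indicator (fun _ => (1 : ℝ)) | ℱ t]) ω :=
      funext fun t => hωeq t
    rw [this]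
    exact hω
  -- a.e. convergence of the ENNReal product to 0
  have haeprod : ∀ᵐ ω ∂P, Tendsto (fun t => ξ t ω A * ξ t ω Aᶜ) atTop (𝓝 0) := by
    filter_upwards [hlevy A hA, hlevy Aᶜ hA.compl] with ω h1 h2
    have hne : ∀ t, ξ t ω A * ξ t ω Aᶜ ≠ ⊤ := fun t =>
      (lt_of_le_of_lt (mul_le_one' (hle1 t A ω) (hle1 t Aᶜ ω)) ENNReal.one_lt_top).ne
    have htoReal : Tendsto (fun t => ((ξ t ω A) * (ξ t ω Aᶜ)).toReal) atTop (𝓝 0) := by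
      have heq : (fun t => ((ξ t ω A) * (ξ t ω Aᶜ)).toReal)
          = fun t => (ξ t ω A).toReal * (ξ t ω Aᶜ).toReal := by
        funext t; exact ENNReal.toReal_mul
      rw [heq]
      have hmul := h1.mul h2
      have : (X ⁻¹' A).indicator (fun _ => (1:ℝ)) ω
          * (X ⁻¹' Aᶜ).indicator (fun _ => (1:ℝ)) ω = 0 := by
        by_cases h : X ω ∈ A
        · have h' : X ω ∉ Aᶜ := fun hc => hc h
          simp [Set.indicator_apply, Set.mem_preimage, h, h']
        · simp [Set.indicator_apply, Set.mem_preimage, h]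
      rwa [this] at hmul
    have : (fun t => ξ t ω A * ξ t ω Aᶜ)
        = fun t => ENNReal.ofReal ((ξ t ω A * ξ t ω Aᶜ).toReal) := by
      funext t; rw [ENNReal.ofReal_toReal (hne t)]
    rw [this]
    simpa using ENNReal.tendsto_ofReal htoReal
  -- dominated convergence
  have hiid' : ∀ t, P (X ⁻¹' A ∩ Xt t ⁻¹' Aᶜ) = ∫⁻ ω, ξ t ω A * ξ t ω Aᶜ ∂P := by
    intro t
    have := hiid t A Aᶜ hA hA.compl Set.univ MeasurableSet.univ
    simpa [Set.univ_inter] using this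
  have hDCT : Tendsto (fun t => ∫⁻ ω, ξ t ω A * ξ t ω Aᶜ ∂P) atTop (𝓝 0) := by
    have := tendsto_lintegral_of_dominated_convergence (μ := P)
      (F := fun t ω => ξ t ω A * ξ t ω Aᶜ) (f := fun _ => 0) (bound := fun _ => 1)
      (fun t => (((hmeasB t A hA).mul (hmeasB t Aᶜ hA.compl)).mono (hle t) le_rfl))
      (fun t => Filter.Eventually.of_forall fun ω =>
        mul_le_one' (hle1 t A ω) (hle1 t Aᶜ ω))
      (by simp) haeprod
    simpa using this
  have : (fun t => P (X ⁻¹' A ∩ Xt t ⁻¹' Aᶜ))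
      = fun t => ∫⁻ ω, ξ t ω A * ξ t ω Aᶜ ∂P := funext hiid'
  rw [this]
  exact hDCT

theorem stmt13 {Ω S : Type*} [mΩ : MeasurableSpace Ω]
    [MetricSpace S] [CompleteSpace S] [SecondCountableTopology S]
    [MeasurableSpace S] [BorelSpace S]
    (P : Measure Ω) [IsProbabilityMeasure P]
    (F : ℕ → MeasurableSpace Ω) (hmono : Monotone F) (hle : ∀ t, F t ≤ mΩ)
    (X : Ω → S) (hX : Measurable[⨆ t, F t] X)
    (Xt : ℕ → Ω → S) (hXt : ∀ t, Measurable[mΩ] (Xt t))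
    (ξ : ℕ → Ω → Measure S) (hξm : ∀ t, Measurable[F t] (ξ t))
    (hξp : ∀ t ω, IsProbabilityMeasure (ξ t ω))
    (hiid : ∀ t, ∀ A B : Set S, MeasurableSet A → MeasurableSet B →
      ∀ C : Set Ω, MeasurableSet[F t] C →
        P (C ∩ X ⁻¹' A ∩ Xt t ⁻¹' B) = ∫⁻ ω in C, ξ t ω A * ξ t ω B ∂P) :
    TendstoInMeasure P Xt atTop X := by
  have hXm : Measurable X := hX.mono (iSup_le hle) le_rfl
  refine tendstoInMeasure_of_ne_top fun ε' hε' hεtop => ?_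
  obtain ⟨ε, hε, rfl⟩ : ∃ ε : ℝ, 0 < ε ∧ ε' = ENNReal.ofReal ε :=
    ⟨ε'.toReal, ENNReal.toReal_pos hε'.ne' hεtop, (ENNReal.ofReal_toReal hεtop).symm⟩
  simp only [edist_dist, ENNReal.ofReal_le_ofReal_iff dist_nonneg]
  -- nonempty S
  haveI : Nonempty Ω := by
    rcases isEmpty_or_nonempty Ω with h | h
    · exfalso
      have h1 : P Set.univ = 1 := measure_univ
      rw [Set.univ_eq_empty_iff.mpr h, measure_empty] at h1
      exact zero_ne_one h1
    · exact h
  haveI : Nonempty S := ⟨X (Classical.arbitrary Ω)⟩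
  set u : ℕ → S := TopologicalSpace.denseSeq S with hu
  have hdense : DenseRange u := TopologicalSpace.denseRange_denseSeq S
  obtain ⟨A, hAsub, hAmeas, hAdisj, hAcover⟩ :
      ∃ A : ℕ → Set S, (∀ n, A n ⊆ Metric.ball (u n) (ε / 2))
        ∧ (∀ n, MeasurableSet (A n)) ∧ Pairwise (Function.onFun Disjoint A)
        ∧ (⋃ n, A n) = Set.univ := by
    refine ⟨disjointed (fun n => Metric.ball (u n) (ε / 2)),
      disjointed_subset _,
      MeasurableSet.disjointed fun n => Metric.isOpen_ball.measurableSet,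
      disjoint_disjointed _, ?_⟩
    rw [iUnion_disjointed]
    refine Set.eq_univ_iff_forall.2 fun x => ?_
    obtain ⟨n, hn⟩ := (Metric.denseRange_iff.1 hdense) x (ε / 2) (by linarith)
    exact Set.mem_iUnion.2 ⟨n, by simpa [Metric.mem_ball, dist_comm] using hn⟩
  -- key inclusion
  have hincl : ∀ t, {ω | ε ≤ dist (Xt t ω) (X ω)}
      ⊆ ⋃ n, (X ⁻¹' A n ∩ Xt t ⁻¹' (A n)ᶜ) := by
    intro t ω hω
    have hXω : X ω ∈ ⋃ n, A n := hAcover ▸ Set.mem_univ _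
    obtain ⟨n, hn⟩ := Set.mem_iUnion.1 hXω
    refine Set.mem_iUnion.2 ⟨n, hn, fun hc => ?_⟩
    have h1 : X ω ∈ Metric.ball (u n) (ε / 2) := hAsub n hn
    have h2 : Xt t ω ∈ Metric.ball (u n) (ε / 2) := hAsub n hc
    have : dist (Xt t ω) (X ω) < ε := by
      calc dist (Xt t ω) (X ω) ≤ dist (Xt t ω) (u n) + dist (u n) (X ω) := dist_triangle _ _ _
        _ < ε / 2 + ε / 2 := by
            refine add_lt_add ?_ ?_
            · simpa [Metric.mem_ball] using h2
            · rw [dist_comm]; simpa [Metric.mem_ball] using h1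
        _ = ε := by ring
    exact absurd hω (not_le.2 this)
  -- the sum bound and convergence
  have hterm : ∀ n, Tendsto (fun t => P (X ⁻¹' A n ∩ Xt t ⁻¹' (A n)ᶜ)) atTop (𝓝 0) :=
    fun n => stmt13_aux P F hmono hle X hX Xt hXt ξ hξm hξp hiid (A n) (hAmeas n)
  have hsum1 : ∑' n, P (X ⁻¹' A n) = 1 := by
    rw [← measure_iUnion (fun i j hij => (hAdisj hij).preimage X)
      (fun n => hXm (hAmeas n)), ← Set.preimage_iUnion, hAcover, Set.preimage_univ,
      measure_univ]
  have hgoal : Tendsto (fun t => ∑' n, P (X ⁻¹' A n ∩ Xt t ⁻¹' (A n)ᶜ)) atTop (𝓝 0) := by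
    rw [ENNReal.tendsto_nhds_zero]
    intro δ hδ
    -- choose tail cutoff
    have htail : Tendsto (fun N => ∑' n, P (X ⁻¹' A (n + N))) atTop (𝓝 0) :=
      ENNReal.tendsto_sum_nat_add _ (by rw [hsum1]; exact ENNReal.one_ne_top)
    have hδ2 : (0 : ENNReal) < δ / 2 := ENNReal.half_pos hδ.ne'
    obtain ⟨N, hN⟩ := ((ENNReal.tendsto_nhds_zero.1 htail) (δ / 2) hδ2).exists
    have hfin : Tendsto (fun t => ∑ n ∈ Finset.range N, P (X ⁻¹' A n ∩ Xt t ⁻¹' (A n)ᶜ))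
        atTop (𝓝 0) := by
      have := tendsto_finset_sum (Finset.range N) (fun n _ => hterm n)
      simpa using this
    filter_upwards [(ENNReal.tendsto_nhds_zero.1 hfin) (δ / 2) hδ2] with t ht
    have htail_le : ∑' n, P (X ⁻¹' A (n + N) ∩ Xt t ⁻¹' (A (n + N))ᶜ)
        ≤ ∑' n, P (X ⁻¹' A (n + N)) :=
      ENNReal.tsum_le_tsum fun n =>
        measure_mono (Set.inter_subset_left)
    calc ∑' n, P (X ⁻¹' A n ∩ Xt t ⁻¹' (A n)ᶜ)
        = ∑ n ∈ Finset.range N, P (X ⁻¹' A n ∩ Xt t ⁻¹' (A n)ᶜ)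
          + ∑' n, P (X ⁻¹' A (n + N) ∩ Xt t ⁻¹' (A (n + N))ᶜ) :=
          (Summable.sum_add_tsum_nat_add' (f := fun n => P (X ⁻¹' A n ∩ Xt t ⁻¹' (A n)ᶜ)) (k := N) ENNReal.summable).symm
      _ ≤ δ / 2 + δ / 2 := add_le_add ht (le_trans htail_le hN)
      _ = δ := ENNReal.add_halves δ
  refine tendsto_of_tendsto_of_tendsto_of_le_of_le tendsto_const_nhds hgoal
    (fun t => zero_le) (fun t => ?_)
  exact le_trans (measure_mono (hincl t)) (measure_iUnion_le _)
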